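/- Let X be a symmetric simplicial set. The following are equivalent: (1) for each n ≥ 1, the map 𝓔_T : X_n → lim_T X is a bijection for every spine T of [n]; (2) for each n ≥ 1 there exists a spine T of [n] such that 𝓔_T is a bijection; (3) X is isomorphic to the nerve of a groupoid, regarded as a symmetric set (the symmetric nerve of a groupoid G has n-simplices the functors to G from the indiscrete groupoid on the set [n]). -/

import Mathlib

/-- A symmetric (simplicial) set: a functor `Υᵒᵖ → Set`, where `Υ` has objects
`[n] = {0,…,n}` (encoded as `Fin (n+1)`) and all functions as morphisms.
For `α : [m] → [n]` and `x ∈ X_n`, `act α x` is `x · α ∈ X_m`. -/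
structure SymSet where
  obj : ℕ → Type
  act : ∀ {m n : ℕ}, (Fin (m + 1) → Fin (n + 1)) → obj n → obj m
  act_id : ∀ {n : ℕ} (x : obj n), act id x = x
  act_comp : ∀ {m n k : ℕ} (α : Fin (m + 1) → Fin (n + 1)) (β : Fin (n + 1) → Fin (k + 1))
      (x : obj k), act α (act β x) = act (β ∘ α) x

namespace SymSet

/-- `x_{ij} ∈ X_1`, the action on `x ∈ X_n` of the map `[1] → [n]` with `0 ↦ i`, `1 ↦ j`. -/
def edge (X : SymSet) {n : ℕ} (i j : Fin (n + 1)) (x : X.obj n) : X.obj 1 :=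
  X.act (fun t : Fin 2 => if t = 0 then i else j) x

/-- The domain of an edge, its image under `ι₀ : [0] → [1]`, `0 ↦ 0`. -/
def edgeDom (X : SymSet) (f : X.obj 1) : X.obj 0 :=
  X.act (fun _ : Fin 1 => (0 : Fin 2)) f

/-- The codomain of an edge, its image under `ι₁ : [0] → [1]`, `0 ↦ 1`. -/
def edgeCod (X : SymSet) (f : X.obj 1) : X.obj 0 :=
  X.act (fun _ : Fin 1 => (1 : Fin 2)) f

/-- The identity edge `id_a` on an object `a ∈ X_0`, induced by the unique map `[1] → [0]`. -/
def identityEdge (X : SymSet) (a : X.obj 0) : X.obj 1 :=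
  X.act (fun _ : Fin 2 => (0 : Fin 1)) a

/-- An edge is an identity if it is in the image of `X_0 → X_1`. -/
def IsIdentityEdge (X : SymSet) (f : X.obj 1) : Prop :=
  ∃ a : X.obj 0, f = X.identityEdge a

/-- The tuple of edges `x_{ij}` (for `i < j` an edge `{i,j}` of the spine `T`)
associated to an `n`-simplex `x`. -/
def spineTuple (X : SymSet) {n : ℕ} (T : SimpleGraph (Fin (n + 1))) (x : X.obj n) :
    ∀ i j : Fin (n + 1), i < j → T.Adj i j → X.obj 1 :=
  fun i j _ _ => X.edge i j x

/-- Membership in `lim_T X`: the components have matching endpoints. -/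
def IsSpineLim (X : SymSet) {n : ℕ} (T : SimpleGraph (Fin (n + 1)))
    (e : ∀ i j : Fin (n + 1), i < j → T.Adj i j → X.obj 1) : Prop :=
  ∃ v : Fin (n + 1) → X.obj 0, ∀ (i j : Fin (n + 1)) (hlt : i < j) (h : T.Adj i j),
    X.edgeDom (e i j hlt h) = v i ∧ X.edgeCod (e i j hlt h) = v j

/-- The limit `lim_T X` of the diagram associated to a spine `T`. -/
def SpineLim (X : SymSet) {n : ℕ} (T : SimpleGraph (Fin (n + 1))) : Type :=
  { e : ∀ i j : Fin (n + 1), i < j → T.Adj i j → X.obj 1 // X.IsSpineLim T e }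

lemma spineTuple_isSpineLim (X : SymSet) {n : ℕ} (T : SimpleGraph (Fin (n + 1)))
    (x : X.obj n) : X.IsSpineLim T (X.spineTuple T x) := by
  refine ⟨fun i => X.act (fun _ : Fin 1 => i) x, fun i j hlt h => ⟨?_, ?_⟩⟩
  · show X.act _ (X.act _ x) = _
    rw [X.act_comp]
    show X.act ((fun t : Fin 2 => if t = 0 then i else j) ∘ fun _ : Fin 1 => 0) x
      = X.act (fun _ : Fin 1 => i) x
    congr 1
  · show X.act _ (X.act _ x) = _
    rw [X.act_comp]
    show X.act ((fun t : Fin 2 => if t = 0 then i else j) ∘ fun _ : Fin 1 => 1) x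
      = X.act (fun _ : Fin 1 => j) x
    congr 1

/-- The map `𝓔_T : X_n → lim_T X`. -/
def spineMap (X : SymSet) {n : ℕ} (T : SimpleGraph (Fin (n + 1))) (x : X.obj n) :
    X.SpineLim T :=
  ⟨X.spineTuple T x, X.spineTuple_isSpineLim T x⟩

/-- A symmetric set is *spiny* if `𝓔_T` is injective for every `n ≥ 1` and
every spine `T` of `[n]` (a tree with vertex set `[n]`). -/
def Spiny (X : SymSet) : Prop :=
  ∀ n : ℕ, 1 ≤ n → ∀ T : SimpleGraph (Fin (n + 1)), T.IsTree →
    Function.Injective (X.spineMap T)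

/-- An element `x ∈ X_n` is degenerate if `x = y · σ` for some noninvertible
surjection `σ : [n] → [k]`. -/
def Degenerate (X : SymSet) {n : ℕ} (x : X.obj n) : Prop :=
  ∃ (k : ℕ) (σ : Fin (n + 1) → Fin (k + 1)) (y : X.obj k),
    Function.Surjective σ ∧ ¬ Function.Bijective σ ∧ x = X.act σ y

/-- A symmetric subset (subfunctor) of `X`. -/
structure SymSubset (X : SymSet) where
  carrier : ∀ n : ℕ, Set (X.obj n)
  act_mem : ∀ {m n : ℕ} (α : Fin (m + 1) → Fin (n + 1)) {x : X.obj n},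
    x ∈ carrier n → X.act α x ∈ carrier m

/-- `X` is `n`-skeletal: the smallest symmetric subset of `X` containing all
of its `n`-simplices is all of `X`. -/
def IsSkeletal (X : SymSet) (n : ℕ) : Prop :=
  ∀ Y : SymSubset X, (∀ x : X.obj n, x ∈ Y.carrier n) →
    ∀ (m : ℕ) (x : X.obj m), x ∈ Y.carrier m

/-- `X` has dimension `n`: it is `n`-skeletal but not `k`-skeletal for `k < n`
(for `n ≥ 1` this is equivalent to not being `(n-1)`-skeletal). -/
def HasDim (X : SymSet) (n : ℕ) : Prop :=
  X.IsSkeletal n ∧ ∀ k : ℕ, k < n → ¬ X.IsSkeletal k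

/-- Two objects are related if there is an edge between them (in either direction). -/
def EdgeRel (X : SymSet) (a b : X.obj 0) : Prop :=
  ∃ f : X.obj 1, (X.edgeDom f = a ∧ X.edgeCod f = b) ∨ (X.edgeDom f = b ∧ X.edgeCod f = a)

/-- `X` is connected: it is nonempty and any two objects are joined by a
zig-zag of edges. -/
def Connected (X : SymSet) : Prop :=
  Nonempty (X.obj 0) ∧ ∀ a b : X.obj 0, Relation.ReflTransGen X.EdgeRel a b

/-- `n_a`: the number of nonidentity edges with domain `a`. -/
noncomputable def nEdges (X : SymSet) (a : X.obj 0) : ℕ :=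
  Nat.card { f : X.obj 1 // X.edgeDom f = a ∧ ¬ X.IsIdentityEdge f }

/-- `p(X)`: the maximum of the `n_a` over all objects `a`. -/
noncomputable def pVal (X : SymSet) : ℕ := ⨆ a : X.obj 0, X.nEdges a

/-- A map of symmetric sets (a natural transformation). -/
structure SymMap (X Y : SymSet) where
  app : ∀ n : ℕ, X.obj n → Y.obj n
  naturality : ∀ {m n : ℕ} (α : Fin (m + 1) → Fin (n + 1)) (x : X.obj n),
    app m (X.act α x) = Y.act α (app n x)

/-- A map of symmetric sets is an isomorphism iff it is levelwise bijective. -/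
def SymMap.IsIso {X Y : SymSet} (F : SymMap X Y) : Prop :=
  ∀ n : ℕ, Function.Bijective (F.app n)

/-- `X` and `Y` are isomorphic symmetric sets. -/
def Isomorphic (X Y : SymSet) : Prop := ∃ F : SymMap X Y, F.IsIso

/-- The Bousfield–Segal map `𝓑_m : X_m → X_1^m`, `x ↦ (x_{01}, x_{02}, …, x_{0m})`. -/
def bousfield (X : SymSet) {m : ℕ} (x : X.obj m) : Fin m → X.obj 1 :=
  fun i => X.edge 0 i.succ x

/-- `X` is spiny in degrees below `q`: `𝓔_T` is injective for every spine `T`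
of `[n]` for each `1 ≤ n ≤ q`. -/
def SpinyBelow (X : SymSet) (q : ℕ) : Prop :=
  ∀ n : ℕ, 1 ≤ n → n ≤ q → ∀ T : SimpleGraph (Fin (n + 1)), T.IsTree →
    Function.Injective (X.spineMap T)

/-- `X` is a groupoid: `𝓔_T : X_n → lim_T X` is a bijection for every `n ≥ 1`
and every spine `T` of `[n]`. -/
def IsGroupoid (X : SymSet) : Prop :=
  ∀ n : ℕ, 1 ≤ n → ∀ T : SimpleGraph (Fin (n + 1)), T.IsTree →
    Function.Bijective (X.spineMap T)

/-- `X` is reduced: `X_0` is a singleton. -/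
def Reduced (X : SymSet) : Prop := Nonempty (X.obj 0) ∧ Subsingleton (X.obj 0)

/-- A partial group is a reduced spiny symmetric set. -/
def IsPartialGroup (X : SymSet) : Prop := X.Reduced ∧ X.Spiny

/-- The levelwise product of two symmetric sets. -/
def prod (X Y : SymSet) : SymSet where
  obj n := X.obj n × Y.obj n
  act α p := (X.act α p.1, Y.act α p.2)
  act_id p := by cases p with | mk a b => simp only [X.act_id, Y.act_id]
  act_comp α β p := by cases p with | mk a b => simp only [X.act_comp, Y.act_comp]

end SymSet
open CategoryTheory in
/-- An `n`-simplex of the symmetric nerve of a groupoid `G`: a functor to `G` from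
the indiscrete groupoid on the set `[n]`. -/
structure NerveSimplex (G : Type) [Groupoid G] (n : ℕ) where
  vertex : Fin (n + 1) → G
  hom : ∀ i j : Fin (n + 1), vertex i ⟶ vertex j
  hom_self : ∀ i : Fin (n + 1), hom i i = 𝟙 (vertex i)
  hom_comp : ∀ i j k : Fin (n + 1), hom i j ≫ hom j k = hom i k

open CategoryTheory in
/-- The symmetric nerve of a groupoid. -/
def groupoidNerve (G : Type) [Groupoid G] : SymSet where
  obj n := NerveSimplex G n
  act α x := ⟨fun i => x.vertex (α i), fun i j => x.hom (α i) (α j),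
    fun i => x.hom_self (α i), fun i j k => x.hom_comp (α i) (α j) (α k)⟩
  act_id x := rfl
  act_comp α β x := rfl
open SimpleGraph

private lemma pg_cross_count {N : ℕ} (a b : Fin N) (hab : (a : ℕ) + 1 = (b : ℕ)) :
    ∀ {u v : Fin N} (p : (pathGraph N).Walk u v),
      (p.edges.count s(a, b) + (if u ≤ a then 0 else 1) + (if v ≤ a then 0 else 1)) % 2 = 0 := by
  intro u v p
  induction p with
  | nil => simp only [SimpleGraph.Walk.edges_nil, List.count_nil, Nat.zero_add]; split <;> simp
  | @cons u x v h p ih =>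
    have hadj : (u : ℕ) + 1 = (x : ℕ) ∨ (x : ℕ) + 1 = (u : ℕ) := (pathGraph_adj).mp h
    have hkey : (s(u, x) = s(a, b)) ↔ ¬ ((u ≤ a) ↔ (x ≤ a)) := by
      rw [Sym2.eq_iff]
      simp only [Fin.ext_iff, Fin.le_def]
      constructor
      · rintro (⟨h1, h2⟩ | ⟨h1, h2⟩) <;> omega
      · intro hnc
        rcases hadj with h' | h'
        · left; omega
        · right; omega
    rw [SimpleGraph.Walk.edges_cons, List.count_cons]
    by_cases h1 : u ≤ a <;> by_cases h2 : x ≤ a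
    · have hs : ¬ (s(u,x) = s(a,b)) := by rw [hkey]; simp [h1, h2]
      simp only [if_pos h1, if_pos h2, beq_iff_eq, if_neg hs] at ih ⊢
      omega
    · have hs : s(u,x) = s(a,b) := by rw [hkey]; simp [h1, h2]
      simp only [if_pos h1, if_neg h2, beq_iff_eq, if_pos hs] at ih ⊢
      omega
    · have hs : s(u,x) = s(a,b) := by rw [hkey]; simp [h1, h2]
      simp only [if_neg h1, if_pos h2, beq_iff_eq, if_pos hs] at ih ⊢
      omega
    · have hs : ¬ (s(u,x) = s(a,b)) := by rw [hkey]; simp [h1, h2]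
      simp only [if_neg h1, if_neg h2, beq_iff_eq, if_neg hs] at ih ⊢
      omega

theorem pathGraph_isTree (n : ℕ) : (pathGraph (n + 1)).IsTree := by
  constructor
  · exact pathGraph_connected n
  · intro v c hc
    cases c with
    | nil => exact hc.ne_nil rfl
    | @cons _ x _ h p =>
      obtain ⟨a, b, hab, he⟩ : ∃ a b : Fin (n+1), (a:ℕ)+1 = b ∧ s(v,x) = s(a,b) := by
        rcases (pathGraph_adj).mp h with h' | h'
        · exact ⟨v, x, h', rfl⟩
        · exact ⟨x, v, h', Sym2.eq_swap⟩
      have h1 := pg_cross_count a b hab (Walk.cons h p)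
      have h2 : (Walk.cons h p).edges.count s(a,b) ≤ 1 :=
        List.nodup_iff_count_le_one.mp hc.edges_nodup _
      have h3 : 1 ≤ (Walk.cons h p).edges.count s(a,b) := by
        rw [SimpleGraph.Walk.edges_cons, he, List.count_cons]
        simp
      by_cases hv : v ≤ a
      · simp only [if_pos hv] at h1; omega
      · simp only [if_neg hv] at h1; omega
namespace SymSet

variable {X : SymSet}

/-- The `i`-th vertex of a simplex. -/
def vert (X : SymSet) {n : ℕ} (i : Fin (n + 1)) (x : X.obj n) : X.obj 0 :=
  X.act (fun _ : Fin 1 => i) x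

/-- The reversal of an edge. -/
def rev (X : SymSet) (f : X.obj 1) : X.obj 1 :=
  X.act (fun t : Fin 2 => if t = 0 then 1 else 0) f

lemma edge_act {m n : ℕ} (α : Fin (m + 1) → Fin (n + 1)) (x : X.obj n)
    (i j : Fin (m + 1)) : X.edge i j (X.act α x) = X.edge (α i) (α j) x := by
  unfold edge
  rw [X.act_comp]
  congr 1
  funext t
  by_cases h : t = 0 <;> simp [h]

lemma vert_act {m n : ℕ} (α : Fin (m + 1) → Fin (n + 1)) (x : X.obj n)
    (i : Fin (m + 1)) : X.vert i (X.act α x) = X.vert (α i) x := by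
  unfold vert; rw [X.act_comp]; rfl

lemma edgeDom_edge {n : ℕ} (i j : Fin (n + 1)) (x : X.obj n) :
    X.edgeDom (X.edge i j x) = X.vert i x := by
  unfold edgeDom edge vert; rw [X.act_comp]; rfl

lemma edgeCod_edge {n : ℕ} (i j : Fin (n + 1)) (x : X.obj n) :
    X.edgeCod (X.edge i j x) = X.vert j x := by
  unfold edgeCod edge vert; rw [X.act_comp]; rfl

lemma edge01 (f : X.obj 1) : X.edge 0 1 f = f := by
  unfold edge
  have : (fun t : Fin 2 => if t = 0 then (0 : Fin 2) else 1) = id := by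
    funext t; fin_cases t <;> rfl
  rw [this, X.act_id]

lemma edge_rev {n : ℕ} (i j : Fin (n + 1)) (x : X.obj n) :
    X.edge j i x = X.rev (X.edge i j x) := by
  unfold edge rev
  rw [X.act_comp]
  congr 1
  funext t; fin_cases t <;> rfl

lemma rev_rev (f : X.obj 1) : X.rev (X.rev f) = f := by
  unfold rev
  rw [X.act_comp]
  have : ((fun t : Fin 2 => if t = 0 then (1:Fin 2) else 0) ∘ fun t : Fin 2 => if t = 0 then (1:Fin 2) else 0) = id := by
    funext t; fin_cases t <;> rfl
  rw [this, X.act_id]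

lemma edgeDom_rev (f : X.obj 1) : X.edgeDom (X.rev f) = X.edgeCod f := by
  unfold edgeDom rev edgeCod; rw [X.act_comp]; rfl

lemma edgeCod_rev (f : X.obj 1) : X.edgeCod (X.rev f) = X.edgeDom f := by
  unfold edgeCod rev edgeDom; rw [X.act_comp]; rfl

lemma edge_self {n : ℕ} (i : Fin (n + 1)) (x : X.obj n) :
    X.edge i i x = X.identityEdge (X.vert i x) := by
  unfold edge identityEdge vert
  rw [X.act_comp]
  congr 1
  funext t; by_cases h : t = 0 <;> simp [h]

lemma edgeDom_identityEdge (a : X.obj 0) : X.edgeDom (X.identityEdge a) = a := by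
  unfold edgeDom identityEdge
  rw [X.act_comp]
  have : ((fun _ : Fin 2 => (0 : Fin 1)) ∘ fun _ : Fin 1 => (0 : Fin 2)) = id := by
    funext t; fin_cases t <;> rfl
  rw [this, X.act_id]

lemma edgeCod_identityEdge (a : X.obj 0) : X.edgeCod (X.identityEdge a) = a := by
  unfold edgeCod identityEdge
  rw [X.act_comp]
  have : ((fun _ : Fin 2 => (0 : Fin 1)) ∘ fun _ : Fin 1 => (1 : Fin 2)) = id := by
    funext t; fin_cases t <;> rfl
  rw [this, X.act_id]

lemma rev_identityEdge (a : X.obj 0) : X.rev (X.identityEdge a) = X.identityEdge a := by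
  unfold rev identityEdge
  rw [X.act_comp]
  rfl

lemma vert_eq_self (a : X.obj 0) : X.vert 0 a = a := by
  unfold vert
  have : (fun _ : Fin 1 => (0 : Fin 1)) = id := by funext t; fin_cases t <;> rfl
  rw [this, X.act_id]

/-- Extract raw injectivity from bijectivity of a spine map. -/
lemma spine_inj {n : ℕ} {T : SimpleGraph (Fin (n + 1))}
    (hbij : Function.Bijective (X.spineMap T)) {x y : X.obj n}
    (h : ∀ i j : Fin (n + 1), i < j → T.Adj i j → X.edge i j x = X.edge i j y) : x = y := by
  apply hbij.1
  apply Subtype.ext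
  funext i j hlt hadj
  exact h i j hlt hadj

/-- Extract raw surjectivity from bijectivity of a spine map. -/
lemma spine_surj {n : ℕ} {T : SimpleGraph (Fin (n + 1))}
    (hbij : Function.Bijective (X.spineMap T))
    (e : ∀ i j : Fin (n + 1), i < j → T.Adj i j → X.obj 1) (he : X.IsSpineLim T e) :
    ∃ x : X.obj n, ∀ i j (hlt : i < j) (hadj : T.Adj i j), X.edge i j x = e i j hlt hadj := by
  obtain ⟨x, hx⟩ := hbij.2 ⟨e, he⟩
  refine ⟨x, fun i j hlt hadj => ?_⟩
  have := congrArg Subtype.val hx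
  exact congrFun (congrFun (congrFun (congrFun this i) j) hlt) hadj

end SymSet
namespace SymSet

variable {X : SymSet}

lemma exists_adj_of_connected {n : ℕ} {T : SimpleGraph (Fin (n + 1))} (hT : T.Connected)
    (i k : Fin (n + 1)) (hne : i ≠ k) : ∃ j, T.Adj i j := by
  obtain ⟨w⟩ := hT.preconnected i k
  cases w with
  | nil => exact absurd rfl hne
  | cons h p => exact ⟨_, h⟩

/-- The surjectivity half of the 2-dimensional spine condition: any composable
pair of edges is the inner spine of some 2-simplex. -/
def S2 (X : SymSet) : Prop :=
  ∀ f g : X.obj 1, X.edgeCod f = X.edgeDom g →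
    ∃ y : X.obj 2, X.edge 0 1 y = f ∧ X.edge 1 2 y = g

/-- The injectivity half of the 2-dimensional spine condition. -/
def I2 (X : SymSet) : Prop :=
  ∀ y y' : X.obj 2, X.edge 0 1 y = X.edge 0 1 y' → X.edge 1 2 y = X.edge 1 2 y' → y = y'

lemma two_theory (h2 : ∃ T : SimpleGraph (Fin 3), T.IsTree ∧
    Function.Bijective (X.spineMap T)) : X.S2 ∧ X.I2 := by
  obtain ⟨T, htree, hbij⟩ := h2
  by_cases h01 : T.Adj 0 1 <;> by_cases h02 : T.Adj 0 2 <;> by_cases h12 : T.Adj 1 2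
  · -- triangle: contradiction
    exfalso
    refine htree.IsAcyclic
      (SimpleGraph.Walk.cons h01 (.cons h12 (.cons h02.symm .nil))) ?_
    constructor
    · constructor
      · constructor
        show ([s(0,1), s(1,2), s(2,0)] : List (Sym2 (Fin 3))).Nodup
        decide
      · simp
    · show ([(0:Fin 3),1,2,0] : List (Fin 3)).tail.Nodup
      decide
  · -- edges 01, 02 : star at 0
    set σ : Fin 3 → Fin 3 := fun t => if t = 0 then 1 else if t = 1 then 0 else 2 with hσ
    have hσσ : ∀ y : X.obj 2, X.act σ (X.act σ y) = y := by
      intro y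
      rw [X.act_comp]
      have : σ ∘ σ = id := by funext t; fin_cases t <;> rfl
      rw [this, X.act_id]
    constructor
    · intro f g hfg
      have hlim : X.IsSpineLim T (fun i j _ _ => if j = 1 then X.rev f else g) := by
        refine ⟨![X.edgeCod f, X.edgeDom f, X.edgeCod g], ?_⟩
        intro i j hlt hadj
        fin_cases i <;> fin_cases j <;>
          first
          | exact absurd hlt (by decide)
          | exact absurd hadj h12
          | refine ⟨?_, ?_⟩ <;>
              simp [X.edgeDom_rev, X.edgeCod_rev, hfg]
      obtain ⟨x, hx⟩ := X.spine_surj hbij _ hlim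
      refine ⟨X.act σ x, ?_, ?_⟩
      · rw [X.edge_act]
        show X.edge 1 0 x = f
        rw [X.edge_rev 0 1 x]
        have h1 : X.edge 0 1 x = X.rev f := by simpa using hx 0 1 (by decide) h01
        rw [h1, X.rev_rev]
      · rw [X.edge_act]
        show X.edge 0 2 x = g
        simpa using hx 0 2 (by decide) h02
    · intro y y' hA hB
      have : X.act σ y = X.act σ y' := by
        refine X.spine_inj hbij (fun i j hlt hadj => ?_)
        fin_cases i <;> fin_cases j <;>
          first
          | exact absurd hlt (by decide)
          | exact absurd hadj h12
          | skip
        · rw [X.edge_act σ y, X.edge_act σ y']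
          show X.edge 1 0 y = X.edge 1 0 y'
          rw [X.edge_rev 0 1 y, X.edge_rev 0 1 y', hA]
        · rw [X.edge_act σ y, X.edge_act σ y']
          exact hB
      calc y = X.act σ (X.act σ y) := (hσσ y).symm
        _ = X.act σ (X.act σ y') := by rw [this]
        _ = y' := hσσ y'
  · -- edges 01, 12 : the standard path
    constructor
    · intro f g hfg
      have hlim : X.IsSpineLim T (fun i j _ _ => if i = 0 then f else g) := by
        refine ⟨![X.edgeDom f, X.edgeDom g, X.edgeCod g], ?_⟩
        intro i j hlt hadj
        fin_cases i <;> fin_cases j <;>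
          first
          | exact absurd hlt (by decide)
          | exact absurd hadj h02
          | refine ⟨?_, ?_⟩ <;> simp [hfg]
      obtain ⟨x, hx⟩ := X.spine_surj hbij _ hlim
      refine ⟨x, ?_, ?_⟩
      · simpa using hx 0 1 (by decide) h01
      · simpa using hx 1 2 (by decide) h12
    · intro y y' hA hB
      refine X.spine_inj hbij (fun i j hlt hadj => ?_)
      fin_cases i <;> fin_cases j <;>
        first
        | exact absurd hlt (by decide)
        | exact absurd hadj h02
        | assumption
  · -- only edge 01
    exfalso
    obtain ⟨j, hj⟩ := exists_adj_of_connected htree.isConnected 2 0 (by decide)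
    fin_cases j
    · exact h02 hj.symm
    · exact h12 hj.symm
    · exact T.irrefl hj
  · -- edges 02, 12
    set σ : Fin 3 → Fin 3 := fun t => if t = 0 then 0 else if t = 1 then 2 else 1 with hσ
    have hσσ : ∀ y : X.obj 2, X.act σ (X.act σ y) = y := by
      intro y
      rw [X.act_comp]
      have : σ ∘ σ = id := by funext t; fin_cases t <;> rfl
      rw [this, X.act_id]
    constructor
    · intro f g hfg
      have hlim : X.IsSpineLim T (fun i j _ _ => if i = 0 then f else X.rev g) := by
        refine ⟨![X.edgeDom f, X.edgeCod g, X.edgeCod f], ?_⟩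
        intro i j hlt hadj
        fin_cases i <;> fin_cases j <;>
          first
          | exact absurd hlt (by decide)
          | exact absurd hadj h01
          | refine ⟨?_, ?_⟩ <;>
              simp [X.edgeDom_rev, X.edgeCod_rev, hfg]
      obtain ⟨x, hx⟩ := X.spine_surj hbij _ hlim
      refine ⟨X.act σ x, ?_, ?_⟩
      · rw [X.edge_act]
        show X.edge 0 2 x = f
        simpa using hx 0 2 (by decide) h02
      · rw [X.edge_act]
        show X.edge 2 1 x = g
        rw [X.edge_rev 1 2 x]
        have h1 : X.edge 1 2 x = X.rev g := by simpa using hx 1 2 (by decide) h12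
        rw [h1, X.rev_rev]
    · intro y y' hA hB
      have : X.act σ y = X.act σ y' := by
        refine X.spine_inj hbij (fun i j hlt hadj => ?_)
        fin_cases i <;> fin_cases j <;>
          first
          | exact absurd hlt (by decide)
          | exact absurd hadj h01
          | skip
        · rw [X.edge_act σ y, X.edge_act σ y']
          exact hA
        · rw [X.edge_act σ y, X.edge_act σ y']
          show X.edge 2 1 y = X.edge 2 1 y'
          rw [X.edge_rev 1 2 y, X.edge_rev 1 2 y', hB]
      calc y = X.act σ (X.act σ y) := (hσσ y).symm
        _ = X.act σ (X.act σ y') := by rw [this]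
        _ = y' := hσσ y'
  · -- only edge 02
    exfalso
    obtain ⟨j, hj⟩ := exists_adj_of_connected htree.isConnected 1 0 (by decide)
    fin_cases j
    · exact h01 hj.symm
    · exact T.irrefl hj
    · exact h12 hj
  · -- only edge 12
    exfalso
    obtain ⟨j, hj⟩ := exists_adj_of_connected htree.isConnected 0 1 (by decide)
    fin_cases j
    · exact T.irrefl hj
    · exact h01 hj
    · exact h02 hj
  · -- no edges
    exfalso
    obtain ⟨j, hj⟩ := exists_adj_of_connected htree.isConnected 0 1 (by decide)
    fin_cases j
    · exact T.irrefl hj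
    · exact h01 hj
    · exact h02 hj

end SymSet
namespace SymSet

variable {X : SymSet}

/-- Composition of edges, defined by filling a 2-dimensional spine. -/
noncomputable def comp2 (X : SymSet) (hS : X.S2) (f g : X.obj 1) : X.obj 1 :=
  letI := Classical.dec (X.edgeCod f = X.edgeDom g)
  if h : X.edgeCod f = X.edgeDom g then X.edge 0 2 (Classical.choose (hS f g h)) else f

lemma comp2_spec (hS : X.S2) {f g : X.obj 1} (h : X.edgeCod f = X.edgeDom g) :
    ∃ y : X.obj 2, X.edge 0 1 y = f ∧ X.edge 1 2 y = g ∧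
      X.edge 0 2 y = X.comp2 hS f g := by
  refine ⟨Classical.choose (hS f g h), (Classical.choose_spec (hS f g h)).1,
    (Classical.choose_spec (hS f g h)).2, ?_⟩
  simp only [comp2]
  rw [dif_pos h]

lemma cod_edge01_eq_dom_edge12 (y : X.obj 2) :
    X.edgeCod (X.edge 0 1 y) = X.edgeDom (X.edge 1 2 y) := by
  rw [X.edgeCod_edge, X.edgeDom_edge]

/-- The fundamental relation: in any 2-simplex the long edge is the composition
of the two short ones. -/
lemma comp2_edges (hS : X.S2) (hI : X.I2) (y : X.obj 2) :
    X.edge 0 2 y = X.comp2 hS (X.edge 0 1 y) (X.edge 1 2 y) := by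
  obtain ⟨z, hz1, hz2, hz3⟩ := comp2_spec hS (cod_edge01_eq_dom_edge12 y)
  rw [← hz3]
  congr 1
  exact (hI z y hz1 hz2).symm

/-- The triple of vertices `i j k` of a simplex, as a map `[2] → [n]`. -/
def tri {n : ℕ} (i j k : Fin (n + 1)) : Fin 3 → Fin (n + 1) :=
  fun t => if t = 0 then i else if t = 1 then j else k

/-- The cocycle relation: `x_{ik} = x_{ij} ⬝ x_{jk}` for any `n`-simplex and any
vertices `i j k`. -/
lemma cocycle (hS : X.S2) (hI : X.I2) {n : ℕ} (x : X.obj n) (i j k : Fin (n + 1)) :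
    X.edge i k x = X.comp2 hS (X.edge i j x) (X.edge j k x) := by
  have h0 : X.edge 0 1 (X.act (tri i j k) x) = X.edge i j x := by rw [X.edge_act]; rfl
  have h1 : X.edge 1 2 (X.act (tri i j k) x) = X.edge j k x := by rw [X.edge_act]; rfl
  have h2 : X.edge 0 2 (X.act (tri i j k) x) = X.edge i k x := by rw [X.edge_act]; rfl
  rw [← h0, ← h1, ← h2, comp2_edges hS hI]

lemma dom_comp2 (hS : X.S2) {f g : X.obj 1} (h : X.edgeCod f = X.edgeDom g) :
    X.edgeDom (X.comp2 hS f g) = X.edgeDom f := by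
  obtain ⟨y, h1, h2, h3⟩ := comp2_spec hS h
  rw [← h3, ← h1, X.edgeDom_edge, X.edgeDom_edge]

lemma cod_comp2 (hS : X.S2) {f g : X.obj 1} (h : X.edgeCod f = X.edgeDom g) :
    X.edgeCod (X.comp2 hS f g) = X.edgeCod g := by
  obtain ⟨y, h1, h2, h3⟩ := comp2_spec hS h
  rw [← h3, ← h2, X.edgeCod_edge, X.edgeCod_edge]

lemma vert0_eq_edgeDom (f : X.obj 1) : X.vert 0 f = X.edgeDom f := rfl
lemma vert1_eq_edgeCod (f : X.obj 1) : X.vert 1 f = X.edgeCod f := rfl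

lemma comp2_id_left (hS : X.S2) (hI : X.I2) (f : X.obj 1) :
    X.comp2 hS (X.identityEdge (X.edgeDom f)) f = f := by
  have h := cocycle hS hI (X.act (fun t : Fin 3 => if t = 0 then (0 : Fin 2) else if t = 1 then 0 else 1) f) 0 1 2
  rw [X.edge_act, X.edge_act, X.edge_act] at h
  norm_num at h
  simp only [eq_false (by decide : ¬ ((2:Fin 3) = 0)), eq_false (by decide : ¬ ((2:Fin 3) = 1)), if_false] at h
  rw [X.edge01 f, X.edge_self 0 f, vert0_eq_edgeDom] at h
  exact h.symm

lemma comp2_id_right (hS : X.S2) (hI : X.I2) (f : X.obj 1) :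
    X.comp2 hS f (X.identityEdge (X.edgeCod f)) = f := by
  have h := cocycle hS hI (X.act (fun t : Fin 3 => if t = 0 then (0 : Fin 2) else if t = 1 then 1 else 1) f) 0 1 2
  rw [X.edge_act, X.edge_act, X.edge_act] at h
  norm_num at h
  simp only [eq_false (by decide : ¬ ((2:Fin 3) = 0)), eq_false (by decide : ¬ ((2:Fin 3) = 1)), if_false] at h
  rw [X.edge01 f, X.edge_self 1 f, vert1_eq_edgeCod] at h
  exact h.symm

lemma comp2_rev_right (hS : X.S2) (hI : X.I2) (f : X.obj 1) :
    X.comp2 hS f (X.rev f) = X.identityEdge (X.edgeDom f) := by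
  have h := cocycle hS hI (X.act (fun t : Fin 3 => if t = 0 then (0 : Fin 2) else if t = 1 then 1 else 0) f) 0 1 2
  rw [X.edge_act, X.edge_act, X.edge_act] at h
  norm_num at h
  simp only [eq_false (by decide : ¬ ((2:Fin 3) = 0)), eq_false (by decide : ¬ ((2:Fin 3) = 1)), if_false] at h
  rw [X.edge01 f, X.edge_rev 0 1 f, X.edge01 f, X.edge_self 0 f,
    vert0_eq_edgeDom] at h
  exact h.symm

lemma comp2_rev_left (hS : X.S2) (hI : X.I2) (f : X.obj 1) :
    X.comp2 hS (X.rev f) f = X.identityEdge (X.edgeCod f) := by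
  have h := cocycle hS hI (X.act (fun t : Fin 3 => if t = 0 then (1 : Fin 2) else if t = 1 then 0 else 1) f) 0 1 2
  rw [X.edge_act, X.edge_act, X.edge_act] at h
  norm_num at h
  simp only [eq_false (by decide : ¬ ((2:Fin 3) = 0)), eq_false (by decide : ¬ ((2:Fin 3) = 1)), if_false] at h
  rw [X.edge01 f, X.edge_rev 0 1 f, X.edge01 f, X.edge_self 1 f,
    vert1_eq_edgeCod] at h
  exact h.symm

/-- `(f ⬝ g) ⬝ g⁻¹ = f`. -/
lemma comp2_cancel_right (hS : X.S2) (hI : X.I2) {f g : X.obj 1}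
    (h : X.edgeCod f = X.edgeDom g) :
    X.comp2 hS (X.comp2 hS f g) (X.rev g) = f := by
  obtain ⟨y, h1, h2, h3⟩ := comp2_spec hS h
  have hc := cocycle hS hI y 0 2 1
  rw [h3, h1, X.edge_rev 1 2 y, h2] at hc
  exact hc.symm

/-- `f⁻¹ ⬝ (f ⬝ g) = g`. -/
lemma comp2_cancel_left (hS : X.S2) (hI : X.I2) {f g : X.obj 1}
    (h : X.edgeCod f = X.edgeDom g) :
    X.comp2 hS (X.rev f) (X.comp2 hS f g) = g := by
  obtain ⟨y, h1, h2, h3⟩ := comp2_spec hS h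
  have hc := cocycle hS hI y 1 0 2
  rw [h3, h2, X.edge_rev 0 1 y, h1] at hc
  exact hc.symm

end SymSet
namespace SymSet

variable {X : SymSet}

lemma walk_prop {n : ℕ} {T : SimpleGraph (Fin (n + 1))} (P : Fin (n + 1) → Prop)
    (step : ∀ i j, T.Adj i j → P i → P j) :
    ∀ {i j : Fin (n + 1)} (_ : T.Walk i j), P i → P j := by
  intro i j w
  induction w with
  | nil => exact id
  | cons hadj p ih => exact fun hi => ih (step _ _ hadj hi)

lemma comp2_assoc (hS : X.S2) (hI : X.I2)
    (h3 : ∃ T : SimpleGraph (Fin 4), T.IsTree ∧ Function.Bijective (X.spineMap T))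
    {f g h : X.obj 1} (hfg : X.edgeCod f = X.edgeDom g) (hgh : X.edgeCod g = X.edgeDom h) :
    X.comp2 hS (X.comp2 hS f g) h = X.comp2 hS f (X.comp2 hS g h) := by
  obtain ⟨T, htree, hbij⟩ := h3
  have hc1 : X.edgeCod (X.comp2 hS f g) = X.edgeDom h := by rw [cod_comp2 hS hfg, hgh]
  have hc2 : X.edgeCod f = X.edgeDom (X.comp2 hS g h) := by rw [dom_comp2 hS hgh, hfg]
  set E : Fin 4 → Fin 4 → X.obj 1 :=
    ![![f, f, X.comp2 hS f g, X.comp2 hS f (X.comp2 hS g h)],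
      ![f, f, g, X.comp2 hS g h],
      ![f, f, f, h],
      ![f, f, f, f]] with hE
  set vv : Fin 4 → X.obj 0 :=
    ![X.edgeDom f, X.edgeDom g, X.edgeDom h, X.edgeCod h] with hvv'
  have hvv : ∀ i j : Fin 4, i < j →
      X.edgeDom (E i j) = vv i ∧ X.edgeCod (E i j) = vv j := by
    intro i j hlt
    fin_cases i <;> fin_cases j <;>
      first
      | exact absurd hlt (by decide)
      | skip
    · exact ⟨rfl, hfg⟩
    · refine ⟨?_, ?_⟩
      · show X.edgeDom (X.comp2 hS f g) = X.edgeDom f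
        exact dom_comp2 hS hfg
      · show X.edgeCod (X.comp2 hS f g) = X.edgeDom h
        exact hc1
    · refine ⟨?_, ?_⟩
      · show X.edgeDom (X.comp2 hS f (X.comp2 hS g h)) = X.edgeDom f
        exact dom_comp2 hS hc2
      · show X.edgeCod (X.comp2 hS f (X.comp2 hS g h)) = X.edgeCod h
        rw [cod_comp2 hS hc2, cod_comp2 hS hgh]
    · exact ⟨rfl, hgh⟩
    · refine ⟨?_, ?_⟩
      · show X.edgeDom (X.comp2 hS g h) = X.edgeDom g
        exact dom_comp2 hS hgh
      · show X.edgeCod (X.comp2 hS g h) = X.edgeCod h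
        exact cod_comp2 hS hgh
    · exact ⟨rfl, rfl⟩
  obtain ⟨x, hx⟩ := X.spine_surj hbij (fun i j _ _ => E i j)
    ⟨vv, fun i j hlt _ => hvv i j hlt⟩
  have hvert : ∀ i : Fin 4, X.vert i x = vv i := by
    intro i
    have hne : ∃ k : Fin 4, k ≠ i := by
      by_cases h0 : i = 0
      · exact ⟨1, by rw [h0]; decide⟩
      · exact ⟨0, fun hh => h0 hh.symm⟩
    obtain ⟨k, hk⟩ := hne
    obtain ⟨j, hj⟩ := exists_adj_of_connected htree.isConnected i k (fun hh => hk hh.symm)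
    rcases lt_trichotomy i j with hlt | heq | hgt
    · rw [← X.edgeDom_edge i j x, hx i j hlt hj, (hvv i j hlt).1]
    · exact absurd hj (heq ▸ T.irrefl)
    · rw [← X.edgeCod_edge j i x, hx j i hgt hj.symm, (hvv j i hgt).2]
  -- the three decisive edges
  have hABC : X.edge 0 1 x = f ∧ X.edge 1 2 x = g ∧ X.edge 2 3 x = h := by
    by_cases h23 : T.Adj 2 3
    · by_cases h02 : T.Adj 0 2
      · -- both 23 and 02 are tree edges
        have hC : X.edge 2 3 x = h := hx 2 3 (by decide) h23
        have h02e : X.edge 0 2 x = X.comp2 hS f g := hx 0 2 (by decide) h02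
        by_cases h01 : T.Adj 0 1
        · have hA : X.edge 0 1 x = f := hx 0 1 (by decide) h01
          refine ⟨hA, ?_, hC⟩
          rw [cocycle hS hI x 1 0 2, X.edge_rev 0 1 x, hA, h02e]
          exact comp2_cancel_left hS hI hfg
        · by_cases h12 : T.Adj 1 2
          · have hB : X.edge 1 2 x = g := hx 1 2 (by decide) h12
            refine ⟨?_, hB, hC⟩
            rw [cocycle hS hI x 0 2 1, X.edge_rev 1 2 x, hB, h02e]
            exact comp2_cancel_right hS hI hfg
          · by_cases h13 : T.Adj 1 3
            · have h13e : X.edge 1 3 x = X.comp2 hS g h := hx 1 3 (by decide) h13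
              have hB : X.edge 1 2 x = g := by
                rw [cocycle hS hI x 1 3 2, X.edge_rev 2 3 x, hC, h13e]
                exact comp2_cancel_right hS hI hgh
              refine ⟨?_, hB, hC⟩
              rw [cocycle hS hI x 0 2 1, X.edge_rev 1 2 x, hB, h02e]
              exact comp2_cancel_right hS hI hfg
            · exfalso
              obtain ⟨j, hj⟩ := exists_adj_of_connected htree.isConnected 1 0 (by decide)
              fin_cases j
              · exact h01 hj.symm
              · exact T.irrefl hj
              · exact h12 hj
              · exact h13 hj
      · -- 23 is a tree edge, 02 is not: propagate from vertex 3
        set W : Fin 4 → X.obj 1 :=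
          ![X.comp2 hS f (X.comp2 hS g h), X.comp2 hS g h, h,
            X.identityEdge (X.edgeCod h)] with hW
        have base : X.edge 3 3 x = W 3 := by
          rw [X.edge_self 3 x, hvert 3]; rfl
        have step : ∀ i j, T.Adj i j → X.edge i 3 x = W i → X.edge j 3 x = W j := by
          intro i j hadj hi
          fin_cases i <;> fin_cases j <;>
            first
            | exact absurd hadj T.irrefl
            | exact absurd hadj h02
            | exact absurd hadj.symm h02
            | skip
          · -- (0,1)
            have h01e : X.edge 0 1 x = f := hx 0 1 (by decide) hadj
            have hi' : X.edge 0 3 x = X.comp2 hS f (X.comp2 hS g h) := hi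
            show X.edge 1 3 x = X.comp2 hS g h
            rw [cocycle hS hI x 1 0 3, X.edge_rev 0 1 x, h01e, hi']
            exact comp2_cancel_left hS hI hc2
          · -- (0,3)
            exact base
          · -- (1,0)
            have h01e : X.edge 0 1 x = f := hx 0 1 (by decide) hadj.symm
            have hi' : X.edge 1 3 x = X.comp2 hS g h := hi
            show X.edge 0 3 x = X.comp2 hS f (X.comp2 hS g h)
            rw [cocycle hS hI x 0 1 3, h01e, hi']
          · -- (1,2)
            have h12e : X.edge 1 2 x = g := hx 1 2 (by decide) hadj
            have hi' : X.edge 1 3 x = X.comp2 hS g h := hi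
            show X.edge 2 3 x = h
            rw [cocycle hS hI x 2 1 3, X.edge_rev 1 2 x, h12e, hi']
            exact comp2_cancel_left hS hI hgh
          · -- (1,3)
            exact base
          · -- (2,1)
            have h12e : X.edge 1 2 x = g := hx 1 2 (by decide) hadj.symm
            have hi' : X.edge 2 3 x = h := hi
            show X.edge 1 3 x = X.comp2 hS g h
            rw [cocycle hS hI x 1 2 3, h12e, hi']
          · -- (2,3)
            exact base
          · -- (3,0)
            exact hx 0 3 (by decide) hadj.symm
          · -- (3,1)
            exact hx 1 3 (by decide) hadj.symm
          · -- (3,2)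
            exact hx 2 3 (by decide) hadj.symm
        have hreach : ∀ j : Fin 4, X.edge j 3 x = W j := by
          intro j
          obtain ⟨w⟩ := htree.isConnected.preconnected 3 j
          exact walk_prop (fun i => X.edge i 3 x = W i) step w base
        have hC : X.edge 2 3 x = h := hreach 2
        have h13e : X.edge 1 3 x = X.comp2 hS g h := hreach 1
        have h03e : X.edge 0 3 x = X.comp2 hS f (X.comp2 hS g h) := hreach 0
        have hB : X.edge 1 2 x = g := by
          rw [cocycle hS hI x 1 3 2, X.edge_rev 2 3 x, hC, h13e]
          exact comp2_cancel_right hS hI hgh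
        have hA : X.edge 0 1 x = f := by
          rw [cocycle hS hI x 0 3 1, X.edge_rev 1 3 x, h13e, h03e]
          exact comp2_cancel_right hS hI hc2
        exact ⟨hA, hB, hC⟩
    · -- 23 is not a tree edge: propagate from vertex 0
      set W : Fin 4 → X.obj 1 :=
        ![X.identityEdge (X.edgeDom f), f, X.comp2 hS f g,
          X.comp2 hS f (X.comp2 hS g h)] with hW
      have base : X.edge 0 0 x = W 0 := by
        rw [X.edge_self 0 x, hvert 0]; rfl
      have step : ∀ i j, T.Adj i j → X.edge 0 i x = W i → X.edge 0 j x = W j := by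
        intro i j hadj hi
        fin_cases i <;> fin_cases j <;>
          first
          | exact absurd hadj T.irrefl
          | exact absurd hadj h23
          | exact absurd hadj.symm h23
          | skip
        · exact hx 0 1 (by decide) hadj
        · exact hx 0 2 (by decide) hadj
        · exact hx 0 3 (by decide) hadj
        · exact base
        · -- (1,2)
          have h12e : X.edge 1 2 x = g := hx 1 2 (by decide) hadj
          have hi' : X.edge 0 1 x = f := hi
          show X.edge 0 2 x = X.comp2 hS f g
          rw [cocycle hS hI x 0 1 2, h12e, hi']
        · -- (1,3)
          have h13e : X.edge 1 3 x = X.comp2 hS g h := hx 1 3 (by decide) hadj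
          have hi' : X.edge 0 1 x = f := hi
          show X.edge 0 3 x = X.comp2 hS f (X.comp2 hS g h)
          rw [cocycle hS hI x 0 1 3, h13e, hi']
        · exact base
        · -- (2,1)
          have h12e : X.edge 1 2 x = g := hx 1 2 (by decide) hadj.symm
          have hi' : X.edge 0 2 x = X.comp2 hS f g := hi
          show X.edge 0 1 x = f
          rw [cocycle hS hI x 0 2 1, X.edge_rev 1 2 x, h12e, hi']
          exact comp2_cancel_right hS hI hfg
        · exact base
        · -- (3,1)
          have h13e : X.edge 1 3 x = X.comp2 hS g h := hx 1 3 (by decide) hadj.symm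
          have hi' : X.edge 0 3 x = X.comp2 hS f (X.comp2 hS g h) := hi
          show X.edge 0 1 x = f
          rw [cocycle hS hI x 0 3 1, X.edge_rev 1 3 x, h13e, hi']
          exact comp2_cancel_right hS hI hc2
      have hreach : ∀ j : Fin 4, X.edge 0 j x = W j := by
        intro j
        obtain ⟨w⟩ := htree.isConnected.preconnected 0 j
        exact walk_prop (fun i => X.edge 0 i x = W i) step w base
      have hA : X.edge 0 1 x = f := hreach 1
      have h02e : X.edge 0 2 x = X.comp2 hS f g := hreach 2
      have h03e : X.edge 0 3 x = X.comp2 hS f (X.comp2 hS g h) := hreach 3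
      have hB : X.edge 1 2 x = g := by
        rw [cocycle hS hI x 1 0 2, X.edge_rev 0 1 x, hA, h02e]
        exact comp2_cancel_left hS hI hfg
      have h13e : X.edge 1 3 x = X.comp2 hS g h := by
        rw [cocycle hS hI x 1 0 3, X.edge_rev 0 1 x, hA, h03e]
        exact comp2_cancel_left hS hI hc2
      have hC : X.edge 2 3 x = h := by
        rw [cocycle hS hI x 2 1 3, X.edge_rev 1 2 x, hB, h13e]
        exact comp2_cancel_left hS hI hgh
      exact ⟨hA, hB, hC⟩
  obtain ⟨hA, hB, hC⟩ := hABC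
  have e02 : X.edge 0 2 x = X.comp2 hS f g := by
    rw [cocycle hS hI x 0 1 2, hA, hB]
  have e13 : X.edge 1 3 x = X.comp2 hS g h := by
    rw [cocycle hS hI x 1 2 3, hB, hC]
  calc X.comp2 hS (X.comp2 hS f g) h
      = X.comp2 hS (X.edge 0 2 x) (X.edge 2 3 x) := by rw [e02, hC]
    _ = X.edge 0 3 x := (cocycle hS hI x 0 2 3).symm
    _ = X.comp2 hS (X.edge 0 1 x) (X.edge 1 3 x) := cocycle hS hI x 0 1 3
    _ = X.comp2 hS f (X.comp2 hS g h) := by rw [hA, e13]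

end SymSet
open CategoryTheory in
lemma groupoid_inv_of_comp {G : Type} [Groupoid G] {a b : G} {p : a ⟶ b} {q : b ⟶ a}
    (h : p ≫ q = 𝟙 a) : q = Groupoid.inv p := by
  calc q = 𝟙 b ≫ q := (Category.id_comp q).symm
    _ = (Groupoid.inv p ≫ p) ≫ q := by rw [Groupoid.inv_comp]
    _ = Groupoid.inv p ≫ (p ≫ q) := Category.assoc _ _ _
    _ = Groupoid.inv p ≫ 𝟙 a := by rw [h]
    _ = Groupoid.inv p := Category.comp_id _

namespace SymSet

variable {X : SymSet}

/-- The groupoid structure on `X.obj 0` built from a spiny symmetric set. -/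
noncomputable def grpStruct (hS : X.S2) (hI : X.I2)
    (h3 : ∃ T : SimpleGraph (Fin 4), T.IsTree ∧ Function.Bijective (X.spineMap T)) :
    CategoryTheory.Groupoid (X.obj 0) where
  Hom a b := {f : X.obj 1 // X.edgeDom f = a ∧ X.edgeCod f = b}
  id a := ⟨X.identityEdge a, X.edgeDom_identityEdge a, X.edgeCod_identityEdge a⟩
  comp {a b c} F G := ⟨X.comp2 hS F.1 G.1,
    by rw [dom_comp2 hS (F.2.2.trans G.2.1.symm)]; exact F.2.1,
    by rw [cod_comp2 hS (F.2.2.trans G.2.1.symm)]; exact G.2.2⟩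
  id_comp {a b} F := by
    obtain ⟨f, hd, hc⟩ := F
    apply Subtype.ext
    show X.comp2 hS (X.identityEdge a) f = f
    subst hd
    exact comp2_id_left hS hI f
  comp_id {a b} F := by
    obtain ⟨f, hd, hc⟩ := F
    apply Subtype.ext
    show X.comp2 hS f (X.identityEdge b) = f
    subst hc
    exact comp2_id_right hS hI f
  assoc {a b c d} F G H := by
    apply Subtype.ext
    exact comp2_assoc hS hI h3 (F.2.2.trans G.2.1.symm) (G.2.2.trans H.2.1.symm)
  inv {a b} F := ⟨X.rev F.1, by rw [X.edgeDom_rev]; exact F.2.2,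
    by rw [X.edgeCod_rev]; exact F.2.1⟩
  inv_comp {a b} F := by
    apply Subtype.ext
    show X.comp2 hS (X.rev F.1) F.1 = X.identityEdge b
    rw [comp2_rev_left hS hI F.1, F.2.2]
  comp_inv {a b} F := by
    apply Subtype.ext
    show X.comp2 hS F.1 (X.rev F.1) = X.identityEdge a
    rw [comp2_rev_right hS hI F.1, F.2.1]

end SymSet

/-- Extensionality for nerve simplices of the groupoid `grpStruct`: it suffices
that the vertices and the underlying edges of all homs agree. -/
lemma nerve_ext_val {X : SymSet} (hS : X.S2) (hI : X.I2)
    (h3 : ∃ T : SimpleGraph (Fin 4), T.IsTree ∧ Function.Bijective (X.spineMap T))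
    {n : ℕ} :
    letI inst := X.grpStruct hS hI h3
    ∀ {x y : NerveSimplex (X.obj 0) n},
    x.vertex = y.vertex →
    (∀ i j, (x.hom i j).val = (y.hom i j).val) → x = y := by
  letI inst := X.grpStruct hS hI h3
  intro x y hv hh
  obtain ⟨xv, xh, hxs, hxc⟩ := x
  obtain ⟨yv, yh, hys, hyc⟩ := y
  subst hv
  simp only [NerveSimplex.mk.injEq, heq_eq_eq, true_and]
  funext i j
  exact Subtype.ext (hh i j)
namespace SymSet

lemma exists_ne_fin {n : ℕ} (hn : 1 ≤ n) (i : Fin (n + 1)) : ∃ k : Fin (n + 1), k ≠ i := by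
  by_cases h0 : i = 0
  · refine ⟨⟨1, by omega⟩, ?_⟩
    rw [h0]
    simp [Fin.ext_iff]
  · exact ⟨0, fun hh => h0 hh.symm⟩

end SymSet

open CategoryTheory SymSet in
theorem stmt2_to_stmt3 (X : SymSet)
    (h2 : ∀ n : ℕ, 1 ≤ n → ∃ T : SimpleGraph (Fin (n + 1)), T.IsTree ∧
      Function.Bijective (X.spineMap T)) :
    ∃ (G : Type) (_ : CategoryTheory.Groupoid G), SymSet.Isomorphic X (groupoidNerve G) := by
  obtain ⟨hS, hI⟩ := two_theory (h2 2 (by norm_num))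
  have h3 := h2 3 (by norm_num)
  letI inst := X.grpStruct hS hI h3
  refine ⟨X.obj 0, inst, ?_⟩
  refine ⟨⟨fun n x => ⟨fun i => X.vert i x,
      fun i j => ⟨X.edge i j x, X.edgeDom_edge i j x, X.edgeCod_edge i j x⟩,
      fun i => Subtype.ext (X.edge_self i x),
      fun i j k => Subtype.ext (cocycle hS hI x i j k).symm⟩, ?_⟩, ?_⟩
  · -- naturality
    intro m n α x
    refine nerve_ext_val hS hI h3 ?_ ?_
    · funext i
      exact X.vert_act α x i
    · intro i j
      exact X.edge_act α x i j
  · -- levelwise bijectivity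
    intro n
    cases n with
    | zero =>
      constructor
      · intro a b hab
        have := congrArg (fun S : NerveSimplex (X.obj 0) 0 => S.vertex 0) hab
        simpa [X.vert_eq_self] using this
      · intro S
        refine ⟨S.vertex 0, ?_⟩
        refine nerve_ext_val hS hI h3 ?_ ?_
        · funext i
          have : i = 0 := by omega
          subst this
          exact X.vert_eq_self _
        · intro i j
          have hi : i = 0 := by omega
          have hj : j = 0 := by omega
          subst hi; subst hj
          show X.edge 0 0 (S.vertex 0) = (S.hom 0 0).val
          rw [S.hom_self 0, X.edge_self 0 (S.vertex 0), X.vert_eq_self]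
          rfl
    | succ m =>
      obtain ⟨T, htree, hbij⟩ := h2 (m + 1) (by omega)
      constructor
      · intro x y hxy
        refine X.spine_inj hbij (fun i j hlt hadj => ?_)
        exact congrArg (fun S : NerveSimplex (X.obj 0) (m+1) => (S.hom i j).val) hxy
      · intro S
        have he : X.IsSpineLim T (fun i j _ _ => (S.hom i j).val) :=
          ⟨S.vertex, fun i j hlt hadj => ⟨(S.hom i j).2.1, (S.hom i j).2.2⟩⟩
        obtain ⟨x, hx⟩ := X.spine_surj hbij _ he
        have hvert : ∀ i, X.vert i x = S.vertex i := by
          intro i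
          obtain ⟨k, hk⟩ := exists_ne_fin (by omega) i
          obtain ⟨j, hj⟩ := exists_adj_of_connected htree.isConnected i k
            (fun hh => hk hh.symm)
          rcases lt_trichotomy i j with hlt | heq | hgt
          · rw [← X.edgeDom_edge i j x, hx i j hlt hj]
            exact (S.hom i j).2.1
          · exact absurd hj (heq ▸ T.irrefl)
          · rw [← X.edgeCod_edge j i x, hx j i hgt hj.symm]
            exact (S.hom j i).2.2
        have hedge : ∀ i j, X.edge i j x = (S.hom i j).val := by
          intro i j
          have base : X.edge i i x = (S.hom i i).val := by
            rw [S.hom_self i, X.edge_self i x, hvert i]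
            rfl
          refine walk_prop (fun b => X.edge i b x = (S.hom i b).val) ?_
            (htree.isConnected.preconnected i j).some base
          intro b c hadj hib
          have hbc : X.edge b c x = (S.hom b c).val := by
            rcases lt_trichotomy b c with hlt | heq | hgt
            · exact hx b c hlt hadj
            · exact absurd hadj (heq ▸ T.irrefl)
            · rw [X.edge_rev c b x, hx c b hgt hadj.symm]
              have hinv : S.hom b c = CategoryTheory.Groupoid.inv (S.hom c b) := by
                apply groupoid_inv_of_comp
                rw [S.hom_comp c b c, S.hom_self c]
              rw [hinv]
              rfl
          rw [cocycle hS hI x i b c, hib, hbc]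
          have : (S.hom i b) ≫ (S.hom b c) = S.hom i c := S.hom_comp i b c
          rw [← this]
          rfl
        exact ⟨x, nerve_ext_val hS hI h3 (funext hvert) hedge⟩
open CategoryTheory

section NerveSpine

variable {G : Type} [Groupoid G]

lemma groupoid_inv_inv {a b : G} (p : a ⟶ b) : Groupoid.inv (Groupoid.inv p) = p :=
  (groupoid_inv_of_comp (Groupoid.inv_comp p)).symm

/-- Composite along a walk of a family of edge homs. -/
def treeHom {V : Type} {T : SimpleGraph V} (v : V → G)
    (E : ∀ a b, T.Adj a b → (v a ⟶ v b)) : ∀ {a b : V}, T.Walk a b → (v a ⟶ v b)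
  | _, _, SimpleGraph.Walk.nil => 𝟙 _
  | _, _, SimpleGraph.Walk.cons h p => E _ _ h ≫ treeHom v E p

lemma treeHom_concat {V : Type} {T : SimpleGraph V} (v : V → G)
    (E : ∀ a b, T.Adj a b → (v a ⟶ v b)) {a b : V} (p : T.Walk a b) :
    ∀ {c : V} (h : T.Adj b c),
      treeHom v E (p.concat h) = treeHom v E p ≫ E b c h := by
  induction p with
  | nil =>
    intro c h
    simp [SimpleGraph.Walk.concat_nil, treeHom]
  | cons h' q ih =>
    intro c h
    rw [SimpleGraph.Walk.concat_cons]
    show E _ _ h' ≫ treeHom v E (q.concat h) = (E _ _ h' ≫ treeHom v E q) ≫ E _ _ h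
    rw [ih, Category.assoc]

variable {n : ℕ} {T : SimpleGraph (Fin (n + 1))}

/-- The root-based hom family associated to tree edge data. -/
noncomputable def rootHom (htree : T.IsTree) (v : Fin (n + 1) → G)
    (E : ∀ a b, T.Adj a b → (v a ⟶ v b)) (i : Fin (n + 1)) : v 0 ⟶ v i :=
  treeHom v E (htree.existsUnique_path 0 i).choose

lemma rootHom_step (htree : T.IsTree) (v : Fin (n + 1) → G)
    (E : ∀ a b, T.Adj a b → (v a ⟶ v b))
    (Esymm : ∀ a b (h : T.Adj a b), E b a h.symm = Groupoid.inv (E a b h))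
    {i j : Fin (n + 1)} (h : T.Adj i j) :
    rootHom htree v E j = rootHom htree v E i ≫ E i j h := by
  set p := (htree.existsUnique_path 0 i).choose with hp'
  have hp : p.IsPath := (htree.existsUnique_path 0 i).choose_spec.1
  by_cases hj : j ∈ p.support
  · -- the path to i passes through j; it must do so as the second-to-last vertex
    have hip : (p.takeUntil j hj).IsPath := hp.takeUntil hj
    have hnotin : i ∉ (p.takeUntil j hj).support := by
      intro hi
      have hs := SimpleGraph.Walk.take_spec p hj
      have hnodup := hp.support_nodup
      rw [← hs, SimpleGraph.Walk.support_append] at hnodup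
      have hid : i ∈ (p.dropUntil j hj).support := SimpleGraph.Walk.end_mem_support _
      rcases SimpleGraph.Walk.mem_support_iff _ |>.mp hid with heq | htl
      · exact h.ne heq
      · exact (List.disjoint_of_nodup_append hnodup) hi htl
    have hq : ((p.takeUntil j hj).concat h.symm).IsPath := by
      rw [SimpleGraph.Walk.isPath_def, SimpleGraph.Walk.support_concat]
      rw [SimpleGraph.Walk.isPath_def] at hip
      simp [List.concat_eq_append, List.nodup_append, hip, hnotin]
      intro a ha hai; rw [hai] at ha; exact hnotin ha
    have huniq : (p.takeUntil j hj).concat h.symm = p :=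
      (htree.existsUnique_path 0 i).choose_spec.2 _ hq
    have huniq2 : p.takeUntil j hj = (htree.existsUnique_path 0 j).choose :=
      (htree.existsUnique_path 0 j).choose_spec.2 _ hip
    have : rootHom htree v E i = rootHom htree v E j ≫ E j i h.symm := by
      rw [rootHom, ← hp', ← huniq, treeHom_concat, rootHom, ← huniq2]
    rw [this, Esymm i j h, Category.assoc, Groupoid.inv_comp, Category.comp_id]
  · -- the path to i does not pass through j
    have hq : (p.concat h).IsPath := by
      rw [SimpleGraph.Walk.isPath_def, SimpleGraph.Walk.support_concat]
      rw [SimpleGraph.Walk.isPath_def] at hp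
      simp [List.concat_eq_append, List.nodup_append, hp, hj]
      intro a ha haj; rw [haj] at ha; exact hj ha
    have huniq : p.concat h = (htree.existsUnique_path 0 j).choose :=
      (htree.existsUnique_path 0 j).choose_spec.2 _ hq
    rw [rootHom, ← huniq, treeHom_concat, rootHom, ← hp']

end NerveSpine
open CategoryTheory in
lemma nerve1_ext {G : Type} [Groupoid G] {x y : NerveSimplex G 1}
    (hv : x.vertex = y.vertex) (hh : HEq (x.hom 0 1) (y.hom 0 1)) : x = y := by
  obtain ⟨xv, xh, hxs, hxc⟩ := x
  obtain ⟨yv, yh, hys, hyc⟩ := y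
  have hv' : xv = yv := hv
  subst hv'
  have h01 : xh 0 1 = yh 0 1 := eq_of_heq hh
  have h10 : xh 1 0 = yh 1 0 := by
    have e1 : xh 1 0 = Groupoid.inv (xh 0 1) :=
      groupoid_inv_of_comp (by rw [hxc 0 1 0, hxs 0])
    have e2 : yh 1 0 = Groupoid.inv (yh 0 1) :=
      groupoid_inv_of_comp (by rw [hyc 0 1 0, hys 0])
    rw [e1, e2, h01]
  simp only [NerveSimplex.mk.injEq, heq_eq_eq, true_and]
  funext s t
  fin_cases s <;> fin_cases t
  · rw [hxs, hys]
  · exact h01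
  · exact h10
  · rw [hxs, hys]

open CategoryTheory SymSet in
theorem nerve_spine_bij {G : Type} [Groupoid G] {n : ℕ} (hn : 1 ≤ n)
    (T : SimpleGraph (Fin (n + 1))) (htree : T.IsTree) :
    Function.Bijective ((groupoidNerve G).spineMap T) := by
  constructor
  · -- injectivity
    intro x y hxy
    have hedges : ∀ i j (hlt : i < j), T.Adj i j →
        (groupoidNerve G).edge i j x = (groupoidNerve G).edge i j y := by
      intro i j hlt hadj
      have := congrArg Subtype.val hxy
      exact congrFun (congrFun (congrFun (congrFun this i) j) hlt) hadj
    have hv : ∀ i, x.vertex i = y.vertex i := by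
      intro i
      obtain ⟨k, hk⟩ := exists_ne_fin hn i
      obtain ⟨j, hj⟩ := exists_adj_of_connected htree.isConnected i k (fun hh => hk hh.symm)
      rcases lt_trichotomy i j with hlt | heq | hgt
      · exact congrArg (fun z : NerveSimplex G 1 => z.vertex 0) (hedges i j hlt hj)
      · exact absurd hj (heq ▸ T.irrefl)
      · exact congrArg (fun z : NerveSimplex G 1 => z.vertex 1) (hedges j i hgt hj.symm)
    obtain ⟨xv, xh, hxs, hxc⟩ := x
    obtain ⟨yv, yh, hys, hyc⟩ := y
    have hveq : xv = yv := funext hv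
    subst hveq
    have htedge : ∀ i j, i < j → T.Adj i j → xh i j = yh i j := by
      intro i j hlt hadj
      have hh : HEq ((groupoidNerve G).edge i j ⟨xv, xh, hxs, hxc⟩).hom
          ((groupoidNerve G).edge i j ⟨xv, yh, hys, hyc⟩).hom := by
        rw [hedges i j hlt hadj]
      exact congrFun (congrFun (eq_of_heq hh) 0) 1
    have hadje : ∀ a b, T.Adj a b → xh a b = yh a b := by
      intro a b hadj
      rcases lt_trichotomy a b with hlt | heq | hgt
      · exact htedge a b hlt hadj
      · exact absurd hadj (heq ▸ T.irrefl)
      · have e1 : xh a b = Groupoid.inv (xh b a) :=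
          groupoid_inv_of_comp (by rw [hxc b a b, hxs b])
        have e2 : yh a b = Groupoid.inv (yh b a) :=
          groupoid_inv_of_comp (by rw [hyc b a b, hys b])
        rw [e1, e2, htedge b a hgt hadj.symm]
    have hall : ∀ i j, xh i j = yh i j := by
      intro i j
      refine walk_prop (fun b => xh i b = yh i b) ?_
        (htree.isConnected.preconnected i j).some (by show xh i i = yh i i; rw [hxs, hys])
      intro b c hadj hib
      rw [← hxc i b c, ← hyc i b c, hib, hadje b c hadj]
    have : xh = yh := funext fun i => funext fun j => hall i j
    subst this
    rfl
  · -- surjectivity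
    rintro ⟨e, he⟩
    obtain ⟨vk, hvk⟩ := he
    set v : Fin (n + 1) → G := fun i => (vk i).vertex 0 with hvdef
    have hd : ∀ a b (hlt : a < b) (hab : T.Adj a b), (e a b hlt hab).vertex 0 = v a :=
      fun a b hlt hab =>
        congrArg (fun z : NerveSimplex G 0 => z.vertex 0) (hvk a b hlt hab).1
    have hc : ∀ a b (hlt : a < b) (hab : T.Adj a b), (e a b hlt hab).vertex 1 = v b :=
      fun a b hlt hab =>
        congrArg (fun z : NerveSimplex G 0 => z.vertex 0) (hvk a b hlt hab).2
    obtain ⟨E, hElt⟩ : ∃ E : ∀ a b, T.Adj a b → (v a ⟶ v b),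
        ∀ a b (hlt : a < b) (hab : T.Adj a b),
          (E a b hab = eqToHom (hd a b hlt hab).symm ≫ (e a b hlt hab).hom 0 1 ≫
            eqToHom (hc a b hlt hab)) ∧
          E b a hab.symm = Groupoid.inv (E a b hab) := by
      refine ⟨fun a b hab =>
        if hlt : a < b then
          eqToHom (hd a b hlt hab).symm ≫ (e a b hlt hab).hom 0 1 ≫ eqToHom (hc a b hlt hab)
        else
          Groupoid.inv (eqToHom (hd b a ((hab.ne.lt_or_gt.resolve_left hlt)) hab.symm).symm ≫
            (e b a ((hab.ne.lt_or_gt.resolve_left hlt)) hab.symm).hom 0 1 ≫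
            eqToHom (hc b a ((hab.ne.lt_or_gt.resolve_left hlt)) hab.symm)), ?_⟩
      intro a b hlt hab
      dsimp only
      constructor
      · rw [dif_pos hlt]
      · rw [dif_pos hlt, dif_neg (lt_asymm hlt)]
    have Esymm : ∀ a b (hab : T.Adj a b), E b a hab.symm = Groupoid.inv (E a b hab) := by
      intro a b hab
      rcases lt_trichotomy a b with hlt | heq | hgt
      · exact (hElt a b hlt hab).2
      · exact absurd hab (heq ▸ T.irrefl)
      · have h2 := (hElt b a hgt hab.symm).2
        have : E a b hab = Groupoid.inv (E b a hab.symm) := h2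
        rw [this, groupoid_inv_inv]
    set g := rootHom htree v E with hgdef
    have hkey : ∀ i j (h : T.Adj i j), Groupoid.inv (g i) ≫ g j = E i j h := by
      intro i j h
      rw [hgdef, rootHom_step htree v E Esymm h, ← Category.assoc, Groupoid.inv_comp,
        Category.id_comp]
    refine ⟨⟨v, fun i j => Groupoid.inv (g i) ≫ g j, ?_, ?_⟩, ?_⟩
    · intro i
      show Groupoid.inv (g i) ≫ g i = 𝟙 (v i)
      rw [Groupoid.inv_comp]
    · intro i j k
      show (Groupoid.inv (g i) ≫ g j) ≫ (Groupoid.inv (g j) ≫ g k) =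
        Groupoid.inv (g i) ≫ g k
      rw [Category.assoc, ← Category.assoc (g j), Groupoid.comp_inv, Category.id_comp]
    · apply Subtype.ext
      funext i j hlt hadj
      show (groupoidNerve G).edge i j _ = e i j hlt hadj
      apply nerve1_ext
      · funext t
        fin_cases t
        · exact (hd i j hlt hadj).symm
        · exact (hc i j hlt hadj).symm
      · show HEq (Groupoid.inv (g i) ≫ g j) ((e i j hlt hadj).hom 0 1)
        rw [hkey i j hadj]
        exact (conj_eqToHom_iff_heq' _ _ _ _).mp (hElt i j hlt hadj).1
open SymSet in
theorem spine_bij_transport {X Y : SymSet} (F : SymMap X Y) (hF : F.IsIso)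
    {n : ℕ} (T : SimpleGraph (Fin (n + 1)))
    (hY : Function.Bijective (Y.spineMap T)) : Function.Bijective (X.spineMap T) := by
  have hnat : ∀ (i j : Fin (n + 1)) (z : X.obj n),
      Y.edge i j (F.app n z) = F.app 1 (X.edge i j z) :=
    fun i j z => (F.naturality _ z).symm
  have hdomnat : ∀ q : X.obj 1, Y.edgeDom (F.app 1 q) = F.app 0 (X.edgeDom q) :=
    fun q => (F.naturality _ q).symm
  have hcodnat : ∀ q : X.obj 1, Y.edgeCod (F.app 1 q) = F.app 0 (X.edgeCod q) :=
    fun q => (F.naturality _ q).symm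
  constructor
  · intro x x' hxx
    have hedges : ∀ i j (hlt : i < j), T.Adj i j → X.edge i j x = X.edge i j x' := by
      intro i j hlt hadj
      have := congrArg Subtype.val hxx
      exact congrFun (congrFun (congrFun (congrFun this i) j) hlt) hadj
    apply (hF n).1
    apply spine_inj hY
    intro i j hlt hadj
    rw [hnat i j x, hnat i j x', hedges i j hlt hadj]
  · rintro ⟨e, he⟩
    obtain ⟨v, hv⟩ := he
    have he' : Y.IsSpineLim T (fun i j hlt hadj => F.app 1 (e i j hlt hadj)) := by
      refine ⟨fun i => F.app 0 (v i), fun i j hlt hadj => ⟨?_, ?_⟩⟩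
      · rw [hdomnat, (hv i j hlt hadj).1]
      · rw [hcodnat, (hv i j hlt hadj).2]
    obtain ⟨y, hy⟩ := Y.spine_surj hY _ he'
    obtain ⟨x, hx⟩ := (hF n).2 y
    refine ⟨x, ?_⟩
    apply Subtype.ext
    funext i j hlt hadj
    apply (hF 1).1
    show F.app 1 (X.edge i j x) = F.app 1 (e i j hlt hadj)
    calc F.app 1 (X.edge i j x) = Y.edge i j (F.app n x) := F.naturality _ x
      _ = Y.edge i j y := by rw [hx]
      _ = F.app 1 (e i j hlt hadj) := hy i j hlt hadj

/-- the following are equivalent: (1) `𝓔_T : X_n → lim_T X` is a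
bijection for every `n ≥ 1` and every spine `T` of `[n]`; (2) for each `n ≥ 1`
there is some spine `T` of `[n]` with `𝓔_T` bijective; (3) `X` is isomorphic to
the symmetric nerve of a groupoid. -/
theorem stmt1 (X : SymSet) :
    List.TFAE [
      ∀ n : ℕ, 1 ≤ n → ∀ T : SimpleGraph (Fin (n + 1)), T.IsTree →
        Function.Bijective (X.spineMap T),
      ∀ n : ℕ, 1 ≤ n → ∃ T : SimpleGraph (Fin (n + 1)), T.IsTree ∧
        Function.Bijective (X.spineMap T),
      ∃ (G : Type) (_ : CategoryTheory.Groupoid G),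
        SymSet.Isomorphic X (groupoidNerve G)] := by
  tfae_have 1 → 2 := by
    intro h1 n hn
    exact ⟨SimpleGraph.pathGraph (n + 1), pathGraph_isTree n,
      h1 n hn _ (pathGraph_isTree n)⟩
  tfae_have 2 → 3 := stmt2_to_stmt3 X
  tfae_have 3 → 1 := by
    rintro ⟨G, inst, F, hF⟩ n hn T htree
    exact spine_bij_transport F hF T (nerve_spine_bij hn T htree)
  tfae_finish
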